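/- arXiv:1502.04685 — 2 statements merged into one kernel-verified Lean document; each statement's English description precedes it below -/
import Mathlib

section
/- Let X and Y be Banach spaces with X compactly embedded in Y, and let f: X → ℝ be a seminorm on X that is continuous with respect to the X-norm. Suppose that for some closed finite-dimensional subspace P ⊆ X the following holds: if v ∈ P with f(v) = 0 then v = 0; and suppose there is a seminorm g on X such that ‖v‖_X is equivalent to g(v) + ‖v‖_Y and g(v) = 0 implies v ∈ P, with g continuous on X and lower semicontinuous with respect to Y-convergence on X-bounded sets. Then there exists C > 0 such that ‖v‖_X ≤ C (g(v) + f(v)) for all v ∈ X. -/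
/-- abstract Peetre-type compactness argument.  Let `X` be compactly embedded
in `Y` via `ι`, `f` a continuous seminorm on `X` definite on a closed finite-dimensional
subspace `P`, and `g` a continuous seminorm with `‖·‖_X` equivalent to `g(·) + ‖ι ·‖_Y`,
`g(v) = 0 → v ∈ P`, and `g` lower semicontinuous along `Y`-convergent, `X`-bounded sequences.
Then `‖v‖_X ≤ C (g v + f v)` for some `C > 0`. -/
theorem statement7 {X Y : Type*} [NormedAddCommGroup X] [NormedSpace ℝ X] [CompleteSpace X]
    [NormedAddCommGroup Y] [NormedSpace ℝ Y] [CompleteSpace Y]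
    (ι : X →L[ℝ] Y) (hinj : Function.Injective ι) (hcpt : IsCompactOperator ι)
    (f g : X → ℝ)
    -- `f` is a seminorm, continuous in the `X`-norm
    (hf0 : ∀ v, 0 ≤ f v) (hfadd : ∀ u v, f (u + v) ≤ f u + f v)
    (hfsmul : ∀ (a : ℝ) v, f (a • v) = |a| * f v) (hfcont : Continuous f)
    -- `g` is a seminorm, continuous in the `X`-norm
    (hg0 : ∀ v, 0 ≤ g v) (hgadd : ∀ u v, g (u + v) ≤ g u + g v)
    (hgsmul : ∀ (a : ℝ) v, g (a • v) = |a| * g v) (hgcont : Continuous g)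
    -- closed finite-dimensional subspace on which `f` is definite
    (P : Submodule ℝ X) [FiniteDimensional ℝ P] (hPclosed : IsClosed (P : Set X))
    (hfP : ∀ v ∈ P, f v = 0 → v = 0)
    -- `‖·‖_X` is equivalent to `g(·) + ‖ι ·‖_Y`
    (c₁ c₂ : ℝ) (hc₁ : 0 < c₁) (hc₂ : 0 < c₂)
    (hequiv : ∀ v : X, c₁ * ‖v‖ ≤ g v + ‖ι v‖ ∧ g v + ‖ι v‖ ≤ c₂ * ‖v‖)
    -- `g(v) = 0` forces `v ∈ P`
    (hgker : ∀ v : X, g v = 0 → v ∈ P)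
    -- lower semicontinuity of `g` with respect to `Y`-convergence on `X`-bounded sets
    (hlsc : ∀ (M : ℝ) (vk : ℕ → X) (w : X), (∀ k, ‖vk k‖ ≤ M) →
      Filter.Tendsto (fun k => ι (vk k)) Filter.atTop (nhds (ι w)) →
      g w ≤ Filter.liminf (fun k => g (vk k)) Filter.atTop) :
    ∃ C > 0, ∀ v : X, ‖v‖ ≤ C * (g v + f v) := by
  by_contra hcon
  push_neg at hcon
  have hsel : ∀ k : ℕ, ∃ v : X, ((k : ℝ) + 1) * (g v + f v) < ‖v‖ := by
    intro k
    obtain ⟨v, hv⟩ := hcon ((k : ℝ) + 1) (by positivity)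
    exact ⟨v, hv⟩
  choose v hv using hsel
  have hvpos : ∀ k, 0 < ‖v k‖ := by
    intro k
    have h1 : (0:ℝ) ≤ ((k : ℝ) + 1) * (g (v k) + f (v k)) := by
      have := hf0 (v k); have := hg0 (v k); positivity
    linarith [hv k]
  set u : ℕ → X := fun k => ‖v k‖⁻¹ • v k with hu
  have hnorm : ∀ k, ‖u k‖ = 1 := by
    intro k
    simp only [hu, norm_smul, norm_inv, norm_norm]
    exact inv_mul_cancel₀ (hvpos k).ne'
  have habs : ∀ k, |‖v k‖⁻¹| = ‖v k‖⁻¹ := fun k =>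
    abs_of_pos (inv_pos.mpr (hvpos k))
  have hsum : ∀ k, g (u k) + f (u k) < 1 / ((k : ℝ) + 1) := by
    intro k
    have hgk : g (u k) = ‖v k‖⁻¹ * g (v k) := by rw [hu]; rw [hgsmul, habs]
    have hfk : f (u k) = ‖v k‖⁻¹ * f (v k) := by rw [hu]; rw [hfsmul, habs]
    rw [hgk, hfk, ← mul_add]
    have h1 : g (v k) + f (v k) < ‖v k‖ / ((k : ℝ) + 1) := by
      rw [lt_div_iff₀ (by positivity : (0:ℝ) < (k:ℝ)+1)]
      linarith [hv k, mul_comm ((k:ℝ)+1) (g (v k) + f (v k))]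
    calc ‖v k‖⁻¹ * (g (v k) + f (v k)) < ‖v k‖⁻¹ * (‖v k‖ / ((k : ℝ) + 1)) := by
          exact mul_lt_mul_of_pos_left h1 (inv_pos.mpr (hvpos k))
      _ = 1 / ((k : ℝ) + 1) := by
          field_simp
          exact div_self (hvpos k).ne'
  have htend : Filter.Tendsto (fun k : ℕ => 1 / ((k : ℝ) + 1)) Filter.atTop (nhds 0) :=
    tendsto_one_div_add_atTop_nhds_zero_nat
  have htg : Filter.Tendsto (fun k => g (u k)) Filter.atTop (nhds 0) := by
    apply squeeze_zero (fun k => hg0 (u k)) (fun k => ?_) htend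
    have := hsum k; have := hf0 (u k); linarith
  have htf : Filter.Tendsto (fun k => f (u k)) Filter.atTop (nhds 0) := by
    apply squeeze_zero (fun k => hf0 (u k)) (fun k => ?_) htend
    have := hsum k; have := hg0 (u k); linarith
  -- extract a Y-convergent subsequence of ι ∘ u
  have hKcpt : IsCompact (closure <| (ι : X →ₗ[ℝ] Y) '' Metric.closedBall 0 1) :=
    IsCompactOperator.isCompact_closure_image_closedBall (𝕜₁ := ℝ)
      (f := (ι : X →ₗ[ℝ] Y)) hcpt 1
  have hmem : ∀ k, ι (u k) ∈ closure ((ι : X →ₗ[ℝ] Y) '' Metric.closedBall 0 1) := by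
    intro k
    apply subset_closure
    exact ⟨u k, by simp [Metric.mem_closedBall, dist_zero_right, hnorm k], rfl⟩
  obtain ⟨y, -, φ, hφ, hyt⟩ := hKcpt.tendsto_subseq hmem
  -- the subsequence u ∘ φ is Cauchy in X
  have hgneg : ∀ w : X, g (-w) = g w := by
    intro w
    have := hgsmul (-1) w
    simpa using this
  have key : ∀ j l, ‖u (φ j) - u (φ l)‖ ≤
      c₁⁻¹ * (g (u (φ j)) + g (u (φ l)) + ‖ι (u (φ j)) - ι (u (φ l))‖) := by
    intro j l
    have h1 := (hequiv (u (φ j) - u (φ l))).1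
    have h2 : g (u (φ j) - u (φ l)) ≤ g (u (φ j)) + g (u (φ l)) := by
      have := hgadd (u (φ j)) (-(u (φ l)))
      rw [hgneg] at this
      simpa [sub_eq_add_neg] using this
    have h3 : ι (u (φ j) - u (φ l)) = ι (u (φ j)) - ι (u (φ l)) := by
      simp
    rw [h3] at h1
    rw [le_inv_mul_iff₀ hc₁]
    linarith
  have hgφ : Filter.Tendsto (fun j => g (u (φ j))) Filter.atTop (nhds 0) :=
    htg.comp hφ.tendsto_atTop
  have hcauchyY : CauchySeq (fun j => ι (u (φ j))) := hyt.cauchySeq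
  have hcauchy : CauchySeq (fun j => u (φ j)) := by
    rw [Metric.cauchySeq_iff]
    intro ε hε
    have hε4 : 0 < c₁ * ε / 4 := by positivity
    obtain ⟨N1, hN1⟩ := (Metric.tendsto_atTop.mp hgφ) (c₁ * ε / 4) hε4
    obtain ⟨N2, hN2⟩ := Metric.cauchySeq_iff.mp hcauchyY (c₁ * ε / 4) hε4
    refine ⟨max N1 N2, fun m hm n hn => ?_⟩
    have hgm : g (u (φ m)) < c₁ * ε / 4 := by
      have := hN1 m (le_trans (le_max_left _ _) hm)
      rw [Real.dist_eq, abs_sub_lt_iff] at this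
      linarith [this.1]
    have hgn : g (u (φ n)) < c₁ * ε / 4 := by
      have := hN1 n (le_trans (le_max_left _ _) hn)
      rw [Real.dist_eq, abs_sub_lt_iff] at this
      linarith [this.1]
    have hY : ‖ι (u (φ m)) - ι (u (φ n))‖ < c₁ * ε / 4 := by
      have := hN2 m (le_trans (le_max_right _ _) hm) n (le_trans (le_max_right _ _) hn)
      rwa [dist_eq_norm] at this
    rw [dist_eq_norm]
    calc ‖u (φ m) - u (φ n)‖
        ≤ c₁⁻¹ * (g (u (φ m)) + g (u (φ n)) + ‖ι (u (φ m)) - ι (u (φ n))‖) := key m n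
      _ < c₁⁻¹ * (c₁ * ε / 4 + c₁ * ε / 4 + c₁ * ε / 4) := by
          apply mul_lt_mul_of_pos_left _ (inv_pos.mpr hc₁)
          linarith
      _ = 3 * ε / 4 := by field_simp; ring
      _ < ε := by linarith
  obtain ⟨w, hw⟩ := cauchySeq_tendsto_of_complete hcauchy
  have hwnorm : ‖w‖ = 1 := by
    have h1 : Filter.Tendsto (fun j => ‖u (φ j)‖) Filter.atTop (nhds ‖w‖) :=
      (continuous_norm.tendsto w).comp hw
    have h2 : Filter.Tendsto (fun j => ‖u (φ j)‖) Filter.atTop (nhds 1) := by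
      simpa [hnorm] using (tendsto_const_nhds : Filter.Tendsto (fun _ : ℕ => (1:ℝ)) _ _)
    exact tendsto_nhds_unique h1 h2
  have hgw : g w = 0 := by
    have h1 : Filter.Tendsto (fun j => g (u (φ j))) Filter.atTop (nhds (g w)) :=
      (hgcont.tendsto w).comp hw
    exact tendsto_nhds_unique h1 hgφ
  have hfw : f w = 0 := by
    have h1 : Filter.Tendsto (fun j => f (u (φ j))) Filter.atTop (nhds (f w)) :=
      (hfcont.tendsto w).comp hw
    exact tendsto_nhds_unique h1 (htf.comp hφ.tendsto_atTop)
  have hw0 : w = 0 := hfP w (hgker w hgw) hfw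
  rw [hw0, norm_zero] at hwnorm
  exact one_ne_zero hwnorm.symm
end

section
/- Suppose for each j, (λ_{j,h} − λ_j)/λ_j ≥ C (j^{2/n} h²)^{r−1} (1 − j^{2/n} h²), and suppose the mesh size satisfies h = c N^{−1/n} (r−1)^{−1}. If the j-th numerical eigenvalue is required to have relative error at most h^{2θ(r−1)} for some θ ∈ (0,1], then j ≤ C' (r−1)^{(1−θ)n} N^{1−θ}. -/
/-- Theorem 4.4, inequality (4.13): number of reliable eigenvalues.
If `(λ_{j,h} − λ_j)/λ_j ≥ C (j^{2/n} h²)^{r−1} (1 − j^{2/n} h²)`, the mesh size satisfies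
`h = c N^{−1/n} (r−1)⁻¹`, one is in the regime `j^{2/n} h² ≤ 1/2`, and the `j`-th numerical
eigenvalue has relative error at most `h^{2θ(r−1)}` for some `θ ∈ (0,1]`, then
`j ≤ C' (r−1)^{(1−θ)n} N^{1−θ}`. -/
theorem statement9 (n r : ℕ) (hn : 0 < n) (hr : 2 ≤ r)
    (C cm : ℝ) (hC : 0 < C) (hcm : 0 < cm)
    (θ : ℝ) (hθ0 : 0 < θ) (hθ1 : θ ≤ 1) :
    ∃ C' > 0, ∀ (N j : ℕ) (h lamj lamjh : ℝ),
      0 < N → 0 < j → 0 < h → 0 < lamj →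
      h = cm * (N : ℝ) ^ (-(1 : ℝ) / n) * ((r : ℝ) - 1)⁻¹ →
      (j : ℝ) ^ ((2 : ℝ) / n) * h ^ 2 ≤ 1 / 2 →
      (lamjh - lamj) / lamj ≥
        C * ((j : ℝ) ^ ((2 : ℝ) / n) * h ^ 2) ^ (r - 1) *
          (1 - (j : ℝ) ^ ((2 : ℝ) / n) * h ^ 2) →
      (lamjh - lamj) / lamj ≤ h ^ (2 * θ * ((r : ℝ) - 1)) →
      (j : ℝ) ≤ C' * ((r : ℝ) - 1) ^ ((1 - θ) * (n : ℝ)) * (N : ℝ) ^ (1 - θ) := by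
  set K : ℝ := max 1 (2 / C) with hKdef
  have hK1 : (1:ℝ) ≤ K := le_max_left _ _
  have hK0 : (0:ℝ) < K := lt_of_lt_of_le one_pos hK1
  refine ⟨K ^ ((n:ℝ)/2) * cm ^ ((θ-1)*(n:ℝ)), by positivity, ?_⟩
  intro N j h lamj lamjh hN hj hh hlamj hmesh hreg hlow hup
  have hnR : (0:ℝ) < (n:ℝ) := by exact_mod_cast hn
  have hNR : (0:ℝ) < (N:ℝ) := by exact_mod_cast hN
  have hjR : (0:ℝ) < (j:ℝ) := by exact_mod_cast hj
  have hr1 : (1:ℝ) ≤ (r:ℝ) - 1 := by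
    have : (2:ℝ) ≤ r := by exact_mod_cast hr
    linarith
  have hr0 : (0:ℝ) < (r:ℝ) - 1 := by linarith
  have hrn : ((r - 1 : ℕ) : ℝ) = (r:ℝ) - 1 := by
    have h1 : 1 ≤ r := by omega
    push_cast [h1]
    ring
  set X := (j:ℝ) ^ ((2:ℝ)/n) * h ^ 2 with hX
  have hX0 : 0 < X := by positivity
  set y := h ^ ((2:ℝ)*θ) with hy
  have hy0 : 0 < y := Real.rpow_pos_of_pos hh _
  -- relerr ≥ C/2 * X^(r-1)
  have h1 : C/2 * X ^ (r-1) ≤ (lamjh - lamj)/lamj := by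
    have hCX : 0 ≤ C * X ^ (r-1) := by positivity
    calc C/2 * X^(r-1) = C * X^(r-1) * (1/2) := by ring
    _ ≤ C * X^(r-1) * (1 - X) := by nlinarith
    _ ≤ _ := hlow
  -- relerr ≤ y^(r-1)
  have hexp : h ^ (2*θ*((r:ℝ)-1)) = y ^ (r-1) := by
    rw [hy, ← Real.rpow_natCast (h ^ ((2:ℝ)*θ)) (r-1), ← Real.rpow_mul hh.le, hrn]
  have h2 : C/2 * X ^ (r-1) ≤ y ^ (r-1) := by
    rw [← hexp]; linarith
  -- X ≤ K * y
  have h3 : X ≤ K * y := by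
    by_contra hcon
    push_neg at hcon
    have hKy : 0 ≤ K * y := by positivity
    have hpow : (K * y) ^ (r-1) < X ^ (r-1) :=
      pow_lt_pow_left₀ hcon hKy (by omega)
    have hKpow : (2/C) ≤ K ^ (r-1) :=
      le_trans (le_max_right _ _) (le_self_pow₀ hK1 (by omega))
    have hm : y^(r-1) * (2/C) ≤ y^(r-1) * K^(r-1) :=
      mul_le_mul_of_nonneg_left hKpow (by positivity)
    have hXle : X^(r-1) ≤ (2/C) * y^(r-1) := by
      have h2' := mul_le_mul_of_nonneg_left h2 (le_of_lt (by positivity : (0:ℝ) < 2/C))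
      calc X^(r-1) = (2/C) * (C/2 * X^(r-1)) := by field_simp
      _ ≤ (2/C) * y^(r-1) := h2'
    rw [mul_pow] at hpow
    nlinarith
  -- divide by h^2
  have hh2 : y = h ^ ((2:ℝ)*θ - 2) * h ^ 2 := by
    rw [hy, ← Real.rpow_natCast h 2, ← Real.rpow_add hh]
    norm_num
  have h4 : (j:ℝ) ^ ((2:ℝ)/n) ≤ K * h ^ ((2:ℝ)*θ - 2) := by
    have : (j:ℝ) ^ ((2:ℝ)/n) * h^2 ≤ K * h ^ ((2:ℝ)*θ - 2) * h^2 := by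
      calc (j:ℝ) ^ ((2:ℝ)/n) * h^2 = X := rfl
      _ ≤ K * y := h3
      _ = K * h ^ ((2:ℝ)*θ - 2) * h^2 := by rw [hh2]; ring
    exact le_of_mul_le_mul_right this (by positivity)
  -- raise to power n/2
  have hjid : ((j:ℝ) ^ ((2:ℝ)/n)) ^ ((n:ℝ)/2) = (j:ℝ) := by
    rw [← Real.rpow_mul hjR.le]
    have : (2:ℝ)/n * ((n:ℝ)/2) = 1 := by field_simp
    rw [this, Real.rpow_one]
  have h5 : (j:ℝ) ≤ (K * h ^ ((2:ℝ)*θ - 2)) ^ ((n:ℝ)/2) := by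
    rw [← hjid]
    exact Real.rpow_le_rpow (by positivity) h4 (by positivity)
  have h6 : (K * h ^ ((2:ℝ)*θ - 2)) ^ ((n:ℝ)/2)
      = K ^ ((n:ℝ)/2) * h ^ ((θ-1)*(n:ℝ)) := by
    rw [Real.mul_rpow hK0.le (by positivity), ← Real.rpow_mul hh.le]
    congr 1
    ring_nf
  -- substitute the mesh size
  have e1 : ((N:ℝ) ^ (-(1:ℝ)/n)) ^ ((θ-1)*(n:ℝ)) = (N:ℝ) ^ (1-θ) := by
    rw [← Real.rpow_mul hNR.le]
    congr 1
    field_simp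
    ring
  have e2 : (((r:ℝ)-1)⁻¹) ^ ((θ-1)*(n:ℝ)) = ((r:ℝ)-1) ^ ((1-θ)*(n:ℝ)) := by
    rw [Real.inv_rpow hr0.le, ← Real.rpow_neg hr0.le]
    congr 1
    ring
  have h7 : h ^ ((θ-1)*(n:ℝ))
      = cm ^ ((θ-1)*(n:ℝ)) * (N:ℝ) ^ (1-θ) * ((r:ℝ)-1) ^ ((1-θ)*(n:ℝ)) := by
    rw [hmesh, Real.mul_rpow (by positivity) (by positivity),
      Real.mul_rpow hcm.le (by positivity), e1, e2]
  calc (j:ℝ) ≤ (K * h ^ ((2:ℝ)*θ - 2)) ^ ((n:ℝ)/2) := h5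
  _ = K ^ ((n:ℝ)/2) * cm ^ ((θ-1)*(n:ℝ)) * ((r:ℝ)-1) ^ ((1-θ)*(n:ℝ)) * (N:ℝ) ^ (1-θ) := by
      rw [h6, h7]; ring
end
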